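/- Let i, i', i~, i^ : ℕ → ℝ satisfy the Merrifield–Simmons recurrence system with parameters a = 1, b = 0, c = 0 (the ortho-hexagonal cactus case). Then in ℝ[[X]] one has (1 − 8·X − 25·X²) · (∑_{n≥0} i(n)·Xⁿ) = 1 + 10·X + 25·X²; that is, the generating function of the number of independent sets of ortho-hexagonal cacti is (1 + 10x + 25x²)/(1 − 8x − 25x²). -/

import Mathlib

/-- Generating function of the number of independent sets of ortho-hexagonal cacti. -/
theorem merrifield_simmons_genfun_ortho
    (i i' it ih : ℕ → ℝ)
    (hi0 : i 0 = 1) (hi1 : i 1 = 18)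
    (hi'0 : i' 0 = 13) (hit0 : it 0 = 13) (hih0 : ih 0 = 13)
    (hi : ∀ n, 2 ≤ n →
      i n = 5 * i (n - 1) + 8 * (1 : ℝ) * i' (n - 2) + 8 * (0 : ℝ) * it (n - 2)
        + 8 * (0 : ℝ) * ih (n - 2))
    (hi' : ∀ n, 1 ≤ n →
      i' n = 5 * i n + 3 * (1 : ℝ) * i' (n - 1) + 3 * (0 : ℝ) * it (n - 1)
        + 3 * (0 : ℝ) * ih (n - 1))
    (hit : ∀ n, 1 ≤ n →
      it n = 3 * i n + 7 * (1 : ℝ) * i' (n - 1) + 7 * (0 : ℝ) * it (n - 1)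
        + 7 * (0 : ℝ) * ih (n - 1))
    (hih : ∀ n, 1 ≤ n →
      ih n = 4 * i n + 5 * (1 : ℝ) * i' (n - 1) + 5 * (0 : ℝ) * it (n - 1)
        + 5 * (0 : ℝ) * ih (n - 1)) :
    (1 - (8 : PowerSeries ℝ) * PowerSeries.X - (25 : PowerSeries ℝ) * PowerSeries.X ^ 2) * PowerSeries.mk i
      = 1 + (10 : PowerSeries ℝ) * PowerSeries.X + (25 : PowerSeries ℝ) * PowerSeries.X ^ 2 := by
  have h8 : (8 : PowerSeries ℝ) = PowerSeries.C 8 := by norm_num [map_ofNat]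
  have h10 : (10 : PowerSeries ℝ) = PowerSeries.C 10 := by norm_num [map_ofNat]
  have h25 : (25 : PowerSeries ℝ) = PowerSeries.C 25 := by norm_num [map_ofNat]
  -- single recurrence for i
  have hi2 : i 2 = 194 := by
    have := hi 2 (by norm_num); norm_num [hi1, hi'0] at this; linarith
  have hrec : ∀ n, i (n+3) = 8 * i (n+2) + 25 * i (n+1) := by
    intro n
    have h1 := hi (n+3) (by omega)
    have h2 := hi (n+2) (by omega)
    have h3 := hi' (n+1) (by omega)
    simp only [show n+3-1 = n+2 from rfl, show n+3-2 = n+1 from rfl,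
      show n+2-1 = n+1 from rfl, show n+2-2 = n from rfl,
      show n+1-1 = n from rfl] at h1 h2 h3
    nlinarith [h1, h2, h3]
  have key : (1 - (8 : PowerSeries ℝ) * PowerSeries.X - (25 : PowerSeries ℝ) * PowerSeries.X ^ 2) * PowerSeries.mk i
      = PowerSeries.mk i - PowerSeries.C 8 * (PowerSeries.X * PowerSeries.mk i)
        - PowerSeries.C 25 * (PowerSeries.X * (PowerSeries.X * PowerSeries.mk i)) := by
    rw [h8, h25]; ring
  rw [key]
  ext n
  match n with
  | 0 => simp [hi0]
  | 1 =>
    rw [h10, h25]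
    simp [PowerSeries.coeff_C_mul, PowerSeries.coeff_succ_X_mul, hi0, hi1,
      PowerSeries.coeff_X_pow]
    norm_num
  | 2 =>
    rw [h10, h25]
    simp [PowerSeries.coeff_C_mul, pow_two, PowerSeries.coeff_succ_X_mul, hi0, hi1, hi2]
    norm_num
  | (m+3) =>
    rw [h10, h25]
    simp only [map_sub, map_add, PowerSeries.coeff_C_mul, PowerSeries.coeff_succ_X_mul,
      PowerSeries.coeff_mk, PowerSeries.coeff_one, PowerSeries.coeff_X, pow_two]
    have := hrec m
    simp only [if_neg (show ¬ m+3=0 by omega), if_neg (show ¬ m+3=1 by omega),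
      if_neg (show ¬ m+2=1 by omega)]
    linarith
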